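/- Let k ≥ 2 be even and let F be a 2-splitting family of subsets of [k]. Then |F| ≥ 2^{2k} / (9·C(k, k/2)²), where C(k, k/2) is the central binomial coefficient. -/

import Mathlib

open Finset

/-- `A` splits `B` if `|A ∩ B|` equals `⌊|B|/2⌋` or `⌈|B|/2⌉`. -/
def Splits {X : Type*} [DecidableEq X] (A B : Finset X) : Prop :=
  (A ∩ B).card = B.card / 2 ∨ (A ∩ B).card = (B.card + 1) / 2

/-- `F` is `n`-splitting if every splittable collection `B₁, …, Bₙ` is simultaneously
split by some member of `F`. -/
def NSplitting {X : Type*} [Fintype X] [DecidableEq X] (n : ℕ) (F : Finset (Finset X)) : Prop :=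
  ∀ B : Fin n → Finset X, (∃ A : Finset X, ∀ i, Splits A (B i)) →
    ∃ A ∈ F, ∀ i, Splits A (B i)

/-- Any pair of sets admits a common splitter. -/
lemma pair_splittable {X : Type*} [DecidableEq X] (B₁ B₂ : Finset X) :
    ∃ A : Finset X, Splits A B₁ ∧ Splits A B₂ := by
  classical
  obtain ⟨S, hS, hScard⟩ := Finset.exists_subset_card_eq (s := B₁ ∩ B₂) (n := (B₁ ∩ B₂).card / 2)
    (Nat.div_le_self _ _)
  have hTy : ((B₁ ∩ B₂).card + (B₁ \ B₂).card) / 2 - (B₁ ∩ B₂).card / 2 ≤ (B₁ \ B₂).card := by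
    omega
  obtain ⟨T, hT, hTcard⟩ := Finset.exists_subset_card_eq (s := B₁ \ B₂) hTy
  have hUz : ((B₁ ∩ B₂).card + (B₂ \ B₁).card) / 2 - (B₁ ∩ B₂).card / 2 ≤ (B₂ \ B₁).card := by
    omega
  obtain ⟨U, hU, hUcard⟩ := Finset.exists_subset_card_eq (s := B₂ \ B₁) hUz
  refine ⟨S ∪ T ∪ U, ?_, ?_⟩
  · -- A ∩ B₁ = S ∪ T
    have hA : (S ∪ T ∪ U) ∩ B₁ = S ∪ T := by
      ext e
      simp only [Finset.mem_inter, Finset.mem_union]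
      constructor
      · rintro ⟨(h | h) | h, hB⟩
        · exact Or.inl h
        · exact Or.inr h
        · exact absurd hB (Finset.mem_sdiff.mp (hU h)).2
      · rintro (h | h)
        · exact ⟨Or.inl (Or.inl h), (Finset.mem_inter.mp (hS h)).1⟩
        · exact ⟨Or.inl (Or.inr h), (Finset.mem_sdiff.mp (hT h)).1⟩
    have hdisj : Disjoint S T := by
      refine Finset.disjoint_left.mpr fun a haS haT => ?_
      exact (Finset.mem_sdiff.mp (hT haT)).2 (Finset.mem_inter.mp (hS haS)).2
    have hcardB : (B₁ ∩ B₂).card + (B₁ \ B₂).card = B₁.card :=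
      Finset.card_inter_add_card_sdiff B₁ B₂
    left
    rw [hA, Finset.card_union_of_disjoint hdisj, hScard, hTcard]
    omega
  · -- A ∩ B₂ = S ∪ U
    have hA : (S ∪ T ∪ U) ∩ B₂ = S ∪ U := by
      ext e
      simp only [Finset.mem_inter, Finset.mem_union]
      constructor
      · rintro ⟨(h | h) | h, hB⟩
        · exact Or.inl h
        · exact absurd hB (Finset.mem_sdiff.mp (hT h)).2
        · exact Or.inr h
      · rintro (h | h)
        · exact ⟨Or.inl (Or.inl h), (Finset.mem_inter.mp (hS h)).2⟩
        · exact ⟨Or.inr h, (Finset.mem_sdiff.mp (hU h)).1⟩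
    have hdisj : Disjoint S U := by
      refine Finset.disjoint_left.mpr fun a haS haU => ?_
      exact (Finset.mem_sdiff.mp (hU haU)).2 (Finset.mem_inter.mp (hS haS)).1
    have hcardB : (B₂ ∩ B₁).card + (B₂ \ B₁).card = B₂.card :=
      Finset.card_inter_add_card_sdiff B₂ B₁
    have hcomm : (B₂ ∩ B₁).card = (B₁ ∩ B₂).card := by rw [Finset.inter_comm]
    left
    rw [hA, Finset.card_union_of_disjoint hdisj, hScard, hUcard]
    omega

instance {X : Type*} [DecidableEq X] (A : Finset X) : DecidablePred (Splits A) :=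
  fun B => by unfold Splits; infer_instance

/-- A fixed `A` splits at most `3 * C(k, k/2)` subsets of `Fin k`. -/
lemma card_splits_le {k : ℕ} (A : Finset (Fin k)) :
    (Finset.univ.filter (fun B : Finset (Fin k) => Splits A B)).card
      ≤ 3 * k.choose (k / 2) := by
  classical
  set a := A.card with ha
  -- B ↦ symmDiff A B maps injectively into sets of cardinality a-1, a, a+1
  have hmaps : ∀ B ∈ Finset.univ.filter (fun B : Finset (Fin k) => Splits A B),
      (symmDiff A B) ∈ Finset.univ.filter
        (fun S : Finset (Fin k) => S.card = a - 1 ∨ S.card = a ∨ S.card = a + 1) := by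
    intro B hB
    rw [Finset.mem_filter] at hB ⊢
    refine ⟨Finset.mem_univ _, ?_⟩
    obtain ⟨-, hB⟩ := hB
    have h1 : (B ∩ A).card + (B \ A).card = B.card := Finset.card_inter_add_card_sdiff B A
    have h2 : (A ∩ B).card + (A \ B).card = A.card := Finset.card_inter_add_card_sdiff A B
    have hBA : (B ∩ A).card = (A ∩ B).card := by rw [Finset.inter_comm]
    have hsd : (symmDiff A B).card = (A \ B).card + (B \ A).card := by
      rw [symmDiff_def, Finset.sup_eq_union]
      exact Finset.card_union_of_disjoint (disjoint_sdiff_sdiff)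
    rcases hB with hB | hB <;> omega
  have hinj : Set.InjOn (fun B => symmDiff A B)
      ↑(Finset.univ.filter (fun B : Finset (Fin k) => Splits A B)) := by
    intro B₁ _ B₂ _ h
    have := congrArg (fun S => symmDiff A S) h
    simpa [symmDiff_symmDiff_cancel_left] using this
  have hle := Finset.card_le_card_of_injOn _ hmaps hinj
  refine hle.trans ?_
  have hsplit : (Finset.univ.filter
      (fun S : Finset (Fin k) => S.card = a - 1 ∨ S.card = a ∨ S.card = a + 1)).card
      ≤ (Finset.univ.filter (fun S : Finset (Fin k) => S.card = a - 1)).card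
        + (Finset.univ.filter (fun S : Finset (Fin k) => S.card = a)).card
        + (Finset.univ.filter (fun S : Finset (Fin k) => S.card = a + 1)).card := by
    have h1 : (Finset.univ.filter
        (fun S : Finset (Fin k) => S.card = a - 1 ∨ S.card = a ∨ S.card = a + 1))
        ⊆ (Finset.univ.filter (fun S : Finset (Fin k) => S.card = a - 1))
          ∪ ((Finset.univ.filter (fun S : Finset (Fin k) => S.card = a))
            ∪ (Finset.univ.filter (fun S : Finset (Fin k) => S.card = a + 1))) := by
      intro S hS
      simp only [Finset.mem_filter, Finset.mem_union] at hS ⊢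
      tauto
    calc _ ≤ _ := Finset.card_le_card h1
    _ ≤ _ := by
        refine (Finset.card_union_le _ _).trans ?_
        have := Finset.card_union_le
          (Finset.univ.filter (fun S : Finset (Fin k) => S.card = a))
          (Finset.univ.filter (fun S : Finset (Fin k) => S.card = a + 1))
        omega
  refine hsplit.trans ?_
  have hcard : ∀ m : ℕ,
      (Finset.univ.filter (fun S : Finset (Fin k) => S.card = m)).card = k.choose m := by
    intro m
    rw [← Fintype.card_subtype]
    rw [Fintype.card_finset_len]
    simp
  rw [hcard, hcard, hcard]
  have := Nat.choose_le_middle (a - 1) k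
  have := Nat.choose_le_middle a k
  have := Nat.choose_le_middle (a + 1) k
  omega

theorem stmt_16 (k : ℕ) (hk : 2 ≤ k) (hke : Even k) (F : Finset (Finset (Fin k)))
    (hF : NSplitting 2 F) :
    (2 : ℝ) ^ (2 * k) / (9 * (k.choose (k / 2)) ^ 2) ≤ F.card := by
  classical
  set C := k.choose (k / 2) with hC
  have hCpos : 0 < C := Nat.choose_pos (Nat.div_le_self _ _)
  -- the key counting inequality in ℕ
  have key : 2 ^ (2 * k) ≤ F.card * (9 * C ^ 2) := by
    -- every pair (B 0, B 1) is split by some A ∈ F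
    have hcover : (Finset.univ : Finset (Fin 2 → Finset (Fin k)))
        ⊆ F.biUnion (fun A => Finset.univ.filter (fun B : Fin 2 → Finset (Fin k) =>
            ∀ i, Splits A (B i))) := by
      intro B _
      obtain ⟨A₀, hA₀⟩ := pair_splittable (B 0) (B 1)
      have hsp : ∃ A : Finset (Fin k), ∀ i, Splits A (B i) := by
        refine ⟨A₀, fun i => ?_⟩
        fin_cases i
        · exact hA₀.1
        · exact hA₀.2
      obtain ⟨A, hAF, hA⟩ := hF B hsp
      rw [Finset.mem_biUnion]
      exact ⟨A, hAF, by simp [hA]⟩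
    have hcard_univ : (Finset.univ : Finset (Fin 2 → Finset (Fin k))).card = 2 ^ (2 * k) := by
      rw [Finset.card_univ]
      simp [Fintype.card_fun]
      ring
    have hbound : ∀ A : Finset (Fin k),
        (Finset.univ.filter (fun B : Fin 2 → Finset (Fin k) => ∀ i, Splits A (B i))).card
          ≤ 9 * C ^ 2 := by
      intro A
      have hinj : Set.InjOn (fun B : Fin 2 → Finset (Fin k) => (B 0, B 1))
          ↑(Finset.univ.filter (fun B : Fin 2 → Finset (Fin k) => ∀ i, Splits A (B i))) := by
        intro B₁ _ B₂ _ h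
        funext i
        fin_cases i
        · exact congrArg Prod.fst h
        · exact congrArg Prod.snd h
      have hmaps : ∀ B ∈ Finset.univ.filter
          (fun B : Fin 2 → Finset (Fin k) => ∀ i, Splits A (B i)),
          (B 0, B 1) ∈ (Finset.univ.filter (fun S : Finset (Fin k) => Splits A S)) ×ˢ
            (Finset.univ.filter (fun S : Finset (Fin k) => Splits A S)) := by
        intro B hB
        rw [Finset.mem_filter] at hB
        simp only [Finset.mem_product, Finset.mem_filter]
        exact ⟨⟨Finset.mem_univ _, hB.2 0⟩, ⟨Finset.mem_univ _, hB.2 1⟩⟩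
      have h1 := Finset.card_le_card_of_injOn _ hmaps hinj
      rw [Finset.card_product] at h1
      have h2 := card_splits_le A
      calc _ ≤ _ := h1
      _ ≤ (3 * C) * (3 * C) := Nat.mul_le_mul h2 h2
      _ = 9 * C ^ 2 := by ring
    calc 2 ^ (2 * k) = (Finset.univ : Finset (Fin 2 → Finset (Fin k))).card :=
          hcard_univ.symm
    _ ≤ (F.biUnion (fun A => Finset.univ.filter (fun B : Fin 2 → Finset (Fin k) =>
          ∀ i, Splits A (B i)))).card := Finset.card_le_card hcover
    _ ≤ ∑ A ∈ F, (Finset.univ.filter (fun B : Fin 2 → Finset (Fin k) =>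
          ∀ i, Splits A (B i))).card := Finset.card_biUnion_le
    _ ≤ ∑ _A ∈ F, 9 * C ^ 2 := Finset.sum_le_sum (fun A _ => hbound A)
    _ = F.card * (9 * C ^ 2) := by rw [Finset.sum_const, smul_eq_mul]
  -- transfer to ℝ
  have h9C : (0 : ℝ) < 9 * (C : ℝ) ^ 2 := by positivity
  rw [div_le_iff₀ h9C]
  have := key
  have hcast : ((2 : ℕ) ^ (2 * k) : ℝ) ≤ ((F.card * (9 * C ^ 2) : ℕ) : ℝ) := by
    exact_mod_cast key
  push_cast at hcast
  linarith
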